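/- Let F = α + β be a Randers norm on ℝⁿ with b < 1, f a nonzero covector, A = √((1−b²)‖∇^α f‖²_α + ⟨β^♯,∇^α f⟩²). Then the Finsler gradient (inverse Legendre image of f) is given by ∇f = [(A − ⟨β^♯,∇^α f⟩)/(A(1−b²))] ∇^α f − [(A − ⟨β^♯,∇^α f⟩)²/(A(1−b²)²)] β^♯, where β^♯ has components b^i = a^{ij}b_j and ∇^α f has components a^{ij}f_j. -/

import Mathlib

open Matrix

set_option maxHeartbeats 1000000


/-- The fundamental tensor `g_{ij}(y) = (1/2)[F²]_{y^i y^j}(y)`. -/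
noncomputable def gmat {n : ℕ} (F : (Fin n → ℝ) → ℝ) (y : Fin n → ℝ) :
    Matrix (Fin n) (Fin n) ℝ := fun i j =>
  (1 / 2) * fderiv ℝ (fun z => fderiv ℝ (fun w => (F w) ^ 2) z (Pi.single i 1)) y (Pi.single j 1)

namespace Stmt15Aux

variable {n : ℕ}

noncomputable def pj (i : Fin n) : (Fin n → ℝ) →L[ℝ] ℝ :=
  ContinuousLinearMap.proj i

@[simp] lemma pj_apply (i : Fin n) (v : Fin n → ℝ) : pj i v = v i := rfl

noncomputable def rowCLM (a : Matrix (Fin n) (Fin n) ℝ) (i : Fin n) : (Fin n → ℝ) →L[ℝ] ℝ :=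
  ∑ j, a i j • pj j

@[simp] lemma rowCLM_apply (a : Matrix (Fin n) (Fin n) ℝ) (i : Fin n) (v : Fin n → ℝ) :
    rowCLM a i v = (a *ᵥ v) i := by
  simp [rowCLM, mulVec, dotProduct]

lemma hasFDerivAt_row (a : Matrix (Fin n) (Fin n) ℝ) (i : Fin n) (z : Fin n → ℝ) :
    HasFDerivAt (fun w => (a *ᵥ w) i) (rowCLM a i) z := by
  have h : (fun w : Fin n → ℝ => (a *ᵥ w) i) = ⇑(rowCLM a i) := by
    funext v; simp
  rw [h]
  exact (rowCLM a i).hasFDerivAt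

noncomputable def bCLM (b : Fin n → ℝ) : (Fin n → ℝ) →L[ℝ] ℝ := ∑ i, b i • pj i

@[simp] lemma bCLM_apply (b v : Fin n → ℝ) : bCLM b v = b ⬝ᵥ v := by
  simp [bCLM, dotProduct]

lemma hasFDerivAt_b (b : Fin n → ℝ) (z : Fin n → ℝ) :
    HasFDerivAt (fun w => b ⬝ᵥ w) (bCLM b) z := by
  have h : (fun w : Fin n → ℝ => b ⬝ᵥ w) = ⇑(bCLM b) := by funext v; simp
  rw [h]
  exact (bCLM b).hasFDerivAt

noncomputable def qder (a : Matrix (Fin n) (Fin n) ℝ) (z : Fin n → ℝ) : (Fin n → ℝ) →L[ℝ] ℝ :=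
  ∑ i, (z i • rowCLM a i + (a *ᵥ z) i • pj i)

@[simp] lemma qder_apply (a : Matrix (Fin n) (Fin n) ℝ) (z v : Fin n → ℝ) :
    qder a z v = z ⬝ᵥ (a *ᵥ v) + v ⬝ᵥ (a *ᵥ z) := by
  simp [qder, dotProduct, Finset.sum_add_distrib, mul_comm]

lemma hasFDerivAt_Q (a : Matrix (Fin n) (Fin n) ℝ) (z : Fin n → ℝ) :
    HasFDerivAt (fun w => w ⬝ᵥ a *ᵥ w) (qder a z) z := by
  have h : (fun w : Fin n → ℝ => w ⬝ᵥ a *ᵥ w) = fun w => ∑ i, w i * (a *ᵥ w) i := by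
    funext w; simp [dotProduct]
  rw [h]
  have := HasFDerivAt.fun_sum (fun i (_ : i ∈ Finset.univ) =>
    ((pj i).hasFDerivAt (x := z)).mul (hasFDerivAt_row a i z))
  exact this

lemma dot_symm {a : Matrix (Fin n) (Fin n) ℝ} (hsym : aᵀ = a) (v w : Fin n → ℝ) :
    v ⬝ᵥ a *ᵥ w = w ⬝ᵥ a *ᵥ v := by
  rw [Matrix.dotProduct_mulVec]
  nth_rewrite 1 [← hsym]
  rw [Matrix.vecMul_transpose]
  exact dotProduct_comm _ _

lemma hasFDerivAt_sq (a : Matrix (Fin n) (Fin n) ℝ) (b : Fin n → ℝ) (z : Fin n → ℝ)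
    (hz : 0 < z ⬝ᵥ a *ᵥ z) :
    HasFDerivAt (fun w => (Real.sqrt (w ⬝ᵥ a *ᵥ w) + b ⬝ᵥ w) ^ 2)
      ((Real.sqrt (z ⬝ᵥ a *ᵥ z) + b ⬝ᵥ z) •
          ((1 / (2 * Real.sqrt (z ⬝ᵥ a *ᵥ z))) • qder a z + bCLM b) +
        (Real.sqrt (z ⬝ᵥ a *ᵥ z) + b ⬝ᵥ z) •
          ((1 / (2 * Real.sqrt (z ⬝ᵥ a *ᵥ z))) • qder a z + bCLM b)) z := by
  have h1 := (((hasFDerivAt_Q a z).sqrt hz.ne').add (hasFDerivAt_b b z))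
  have h2 := h1.mul h1
  rw [show (fun w => (Real.sqrt (w ⬝ᵥ a *ᵥ w) + b ⬝ᵥ w) ^ 2) =
      ((fun y => Real.sqrt (y ⬝ᵥ a *ᵥ y)) + fun w => b ⬝ᵥ w) *
        ((fun y => Real.sqrt (y ⬝ᵥ a *ᵥ y)) + fun w => b ⬝ᵥ w) from by funext w; simp [pow_two]]
  exact h2

/-- Key computation : the `i`-th component of `gmat F y *ᵥ y`. -/
lemma key (a : Matrix (Fin n) (Fin n) ℝ) (hsym : aᵀ = a) (b y : Fin n → ℝ)
    (hQ : 0 < y ⬝ᵥ a *ᵥ y) (F : (Fin n → ℝ) → ℝ)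
    (hF : ∀ w, F w = Real.sqrt (w ⬝ᵥ a *ᵥ w) + b ⬝ᵥ w) (i : Fin n) :
    (gmat F y *ᵥ y) i
      = (Real.sqrt (y ⬝ᵥ a *ᵥ y) + b ⬝ᵥ y) *
          ((a *ᵥ y) i * (Real.sqrt (y ⬝ᵥ a *ᵥ y))⁻¹ + b i) := by
  have hφeq : (fun w : Fin n → ℝ => F w ^ 2)
      = fun w => (Real.sqrt (w ⬝ᵥ a *ᵥ w) + b ⬝ᵥ w) ^ 2 := by
    funext w; rw [hF]
  have hQcont : Continuous fun z : Fin n → ℝ => z ⬝ᵥ a *ᵥ z :=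
    continuous_iff_continuousAt.mpr fun z => (hasFDerivAt_Q a z).differentiableAt.continuousAt
  have hU : IsOpen {z : Fin n → ℝ | 0 < z ⬝ᵥ a *ᵥ z} := isOpen_lt continuous_const hQcont
  set gi : (Fin n → ℝ) → ℝ := fun z =>
    2 * ((Real.sqrt (z ⬝ᵥ a *ᵥ z) + b ⬝ᵥ z) *
      ((a *ᵥ z) i * (Real.sqrt (z ⬝ᵥ a *ᵥ z))⁻¹ + b i)) with hgi
  have hev : (fun z => fderiv ℝ (fun w => F w ^ 2) z (Pi.single i 1)) =ᶠ[nhds y] gi := by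
    filter_upwards [hU.mem_nhds hQ] with z hz
    have hz' : (0:ℝ) < z ⬝ᵥ a *ᵥ z := hz
    have hsz : 0 < Real.sqrt (z ⬝ᵥ a *ᵥ z) := Real.sqrt_pos.mpr hz'
    rw [hφeq, (hasFDerivAt_sq a b z hz').fderiv]
    have hd1 : z ⬝ᵥ a *ᵥ Pi.single i 1 = (a *ᵥ z) i := by
      rw [dot_symm hsym]; simp [dotProduct, Pi.single_apply]
    have hd2 : Pi.single i 1 ⬝ᵥ a *ᵥ z = (a *ᵥ z) i := by
      simp [dotProduct, Pi.single_apply]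
    have hd3 : b ⬝ᵥ Pi.single i 1 = b i := by
      simp [dotProduct, Pi.single_apply]
    simp only [ContinuousLinearMap.add_apply, ContinuousLinearMap.smul_apply, qder_apply,
      bCLM_apply, hd1, hd2, hd3, smul_eq_mul, hgi]
    field_simp
    ring
  -- derivative of gi at y
  set sy := Real.sqrt (y ⬝ᵥ a *ᵥ y) with hsydef
  have hsy : 0 < sy := Real.sqrt_pos.mpr hQ
  have hQs : y ⬝ᵥ a *ᵥ y = sy * sy := (Real.mul_self_sqrt hQ.le).symm
  have hsder : HasFDerivAt (fun z => Real.sqrt (z ⬝ᵥ a *ᵥ z))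
      ((1 / (2 * sy)) • qder a y) y := (hasFDerivAt_Q a y).sqrt hQ.ne'
  have hinv : HasFDerivAt (fun z => (Real.sqrt (z ⬝ᵥ a *ᵥ z))⁻¹)
      ((-(sy ^ 2)⁻¹) • ((1 / (2 * sy)) • qder a y)) y :=
    (hasDerivAt_inv hsy.ne').comp_hasFDerivAt y hsder
  have hquot := (hasFDerivAt_row a i y).mul hinv
  have hh := hquot.add_const (b i)
  have hfac := hsder.add (hasFDerivAt_b b y)
  have hmul := hfac.mul hh
  have hg := hmul.const_mul (2:ℝ)
  have hgderiv : HasFDerivAt gi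
      ((2:ℝ) • ((Real.sqrt (y ⬝ᵥ a *ᵥ y) + b ⬝ᵥ y) •
          ((a *ᵥ y) i • ((-(sy ^ 2)⁻¹) • ((1 / (2 * sy)) • qder a y)) +
            (Real.sqrt (y ⬝ᵥ a *ᵥ y))⁻¹ • rowCLM a i) +
        ((a *ᵥ y) i * (Real.sqrt (y ⬝ᵥ a *ᵥ y))⁻¹ + b i) •
          ((1 / (2 * sy)) • qder a y + bCLM b))) y := hg
  -- sum representation
  have hLrepr : ∀ L : (Fin n → ℝ) →L[ℝ] ℝ, ∑ j, (1 / 2 * L (Pi.single j 1)) * y j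
      = 1 / 2 * L y := by
    intro L
    have h1 : L y = ∑ j, y j * L (Pi.single j 1) := by
      conv_lhs => rw [← Finset.univ_sum_single y]
      rw [map_sum]
      refine Finset.sum_congr rfl fun j _ => ?_
      have h2 : Pi.single j (y j) = y j • (Pi.single j 1 : Fin n → ℝ) := by
        funext k
        simp [Pi.single_apply, mul_ite]
      rw [h2, L.map_smul, smul_eq_mul]
    rw [h1, Finset.mul_sum]
    exact Finset.sum_congr rfl fun j _ => by ring
  have hentry : (gmat F y *ᵥ y) i
      = 1 / 2 * fderiv ℝ (fun z => fderiv ℝ (fun w => F w ^ 2) z (Pi.single i 1)) y y := by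
    simp only [gmat, mulVec, dotProduct]
    exact hLrepr _
  rw [hentry, hev.fderiv_eq, hgderiv.fderiv]
  simp only [ContinuousLinearMap.add_apply, ContinuousLinearMap.smul_apply, qder_apply,
    bCLM_apply, rowCLM_apply, smul_eq_mul]
  rw [hQs, Real.sqrt_mul_self hsy.le]
  field_simp
  ring

end Stmt15Aux

open Stmt15Aux in
theorem stmt_15 {n : ℕ} (a : Matrix (Fin n) (Fin n) ℝ) (ha : a.PosDef) (b : Fin n → ℝ)
    (b2 : ℝ) (hb2 : b2 = b ⬝ᵥ (a⁻¹ *ᵥ b)) (hb : b2 < 1)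
    (F : (Fin n → ℝ) → ℝ) (hF : ∀ y, F y = Real.sqrt (y ⬝ᵥ a *ᵥ y) + b ⬝ᵥ y)
    (f : Fin n → ℝ) (hf : f ≠ 0)
    (A : ℝ)
    (hA : A = Real.sqrt ((1 - b2) * (f ⬝ᵥ (a⁻¹ *ᵥ f)) + (b ⬝ᵥ (a⁻¹ *ᵥ f)) ^ 2))
    -- y = ∇f = L⁻¹(f) : the inverse Legendre image of f
    (y : Fin n → ℝ) (hy : y ≠ 0) (hLy : (gmat F y) *ᵥ y = f) :
    y = ((A - b ⬝ᵥ (a⁻¹ *ᵥ f)) / (A * (1 - b2))) • (a⁻¹ *ᵥ f)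
        - ((A - b ⬝ᵥ (a⁻¹ *ᵥ f)) ^ 2 / (A * (1 - b2) ^ 2)) • (a⁻¹ *ᵥ b) := by
  have hsym : aᵀ = a := (by simpa using ha.isHermitian : a.IsSymm)
  have hQ : 0 < y ⬝ᵥ a *ᵥ y := by simpa using ha.dotProduct_mulVec_pos hy
  set α := Real.sqrt (y ⬝ᵥ a *ᵥ y) with hαdef
  have hα : 0 < α := Real.sqrt_pos.mpr hQ
  have hQs : y ⬝ᵥ a *ᵥ y = α * α := (Real.mul_self_sqrt hQ.le).symm
  set B := b ⬝ᵥ y with hBdef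
  -- invertibility
  have hdet : IsUnit a.det := isUnit_iff_ne_zero.mpr ha.det_pos.ne'
  have hainv : a * a⁻¹ = 1 := Matrix.mul_nonsing_inv a hdet
  have hinva : a⁻¹ * a = 1 := Matrix.nonsing_inv_mul a hdet
  set u := a⁻¹ *ᵥ b with hudef
  have hau : a *ᵥ u = b := by
    rw [hudef, Matrix.mulVec_mulVec, hainv, Matrix.one_mulVec]
  have hay : a⁻¹ *ᵥ (a *ᵥ y) = y := by
    rw [Matrix.mulVec_mulVec, hinva, Matrix.one_mulVec]
  -- component formula for f
  have hfi : ∀ i, f i = (α + B) * ((a *ᵥ y) i * α⁻¹ + b i) := by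
    intro i
    rw [← hLy]
    exact key a hsym b y hQ F hF i
  have hfy : f = ((α + B) * α⁻¹) • (a *ᵥ y) + (α + B) • b := by
    funext i
    rw [hfi i]
    simp [mul_comm, smul_eq_mul]
    ring
  have hainvf : a⁻¹ *ᵥ f = ((α + B) * α⁻¹) • y + (α + B) • u := by
    rw [hfy, Matrix.mulVec_add, Matrix.mulVec_smul, Matrix.mulVec_smul, hay]
  -- Cauchy–Schwarz : B² ≤ b2 * (α*α)
  have hb2u : b ⬝ᵥ u = b2 := hb2.symm
  have hub : u ⬝ᵥ b = b2 := by rw [dotProduct_comm]; exact hb2u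
  have huay : u ⬝ᵥ a *ᵥ y = B := by
    rw [dot_symm hsym, hau, dotProduct_comm]
  have hyau : y ⬝ᵥ a *ᵥ u = B := by rw [hau, dotProduct_comm]
  have hCS : B ^ 2 ≤ b2 * (α * α) := by
    have hp : ∀ t : ℝ, 0 ≤ (α * α) * (t * t) + (2 * B) * t + b2 := by
      intro t
      have h0 := ha.posSemidef.dotProduct_mulVec_nonneg (u + t • y)
      simp only [star_trivial, Matrix.mulVec_add, Matrix.mulVec_smul, dotProduct_add,
        add_dotProduct, dotProduct_smul, smul_dotProduct, smul_eq_mul, hau] at h0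
      rw [hub, huay, show y ⬝ᵥ b = B from dotProduct_comm y b, hQs] at h0
      nlinarith [h0]
    have hd := discrim_le_zero hp
    rw [discrim] at hd
    nlinarith [hd]
  have hb2nn : 0 ≤ b2 := by
    rw [hb2]
    simpa using ha.inv.posSemidef.dotProduct_mulVec_nonneg b
  have hFpos : 0 < α + B := by nlinarith [hCS, mul_pos hα hα, sq_nonneg (α - B), sq_nonneg B]
  -- scalar computations
  have hfdot : ∀ v : Fin n → ℝ, f ⬝ᵥ v
      = (α + B) * α⁻¹ * ((a *ᵥ y) ⬝ᵥ v) + (α + B) * (b ⬝ᵥ v) := by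
    intro v
    rw [hfy, add_dotProduct, smul_dotProduct, smul_dotProduct]
    simp [smul_eq_mul]
  have hβ : b ⬝ᵥ (a⁻¹ *ᵥ f) = (α + B) * α⁻¹ * B + (α + B) * b2 := by
    rw [hainvf]
    simp only [dotProduct_add, dotProduct_smul, smul_eq_mul, hb2u]
    rw [← hBdef]
  have hfdoty : f ⬝ᵥ y = (α + B) * α⁻¹ * (α * α) + (α + B) * B := by
    rw [hfdot y, show (a *ᵥ y) ⬝ᵥ y = y ⬝ᵥ a *ᵥ y from dotProduct_comm _ _, hQs, ← hBdef]
  have hfdotu : f ⬝ᵥ u = (α + B) * α⁻¹ * B + (α + B) * b2 := by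
    rw [hfdot u, show (a *ᵥ y) ⬝ᵥ u = u ⬝ᵥ a *ᵥ y from dotProduct_comm _ _, huay, hb2u]
  have hff : f ⬝ᵥ (a⁻¹ *ᵥ f)
      = (α + B) * α⁻¹ * ((α + B) * α⁻¹ * (α * α) + (α + B) * B)
        + (α + B) * ((α + B) * α⁻¹ * B + (α + B) * b2) := by
    rw [hainvf]
    simp only [dotProduct_smul, dotProduct_add, smul_eq_mul]
    rw [hfdoty, hfdotu]
  -- value of A
  have hX : (1 - b2) * (f ⬝ᵥ (a⁻¹ *ᵥ f)) + (b ⬝ᵥ (a⁻¹ *ᵥ f)) ^ 2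
      = ((α + B) ^ 2 / α) ^ 2 := by
    rw [hff, hβ]
    field_simp
    ring
  have hAval : A = (α + B) ^ 2 / α := by
    rw [hA, hX, Real.sqrt_sq (by positivity)]
  have hApos : 0 < A := by rw [hAval]; positivity
  have hAβ : A - b ⬝ᵥ (a⁻¹ *ᵥ f) = (α + B) * (1 - b2) := by
    rw [hAval, hβ]
    field_simp
    ring
  have h1b2 : (0:ℝ) < 1 - b2 := by linarith
  have hc1 : (A - b ⬝ᵥ (a⁻¹ *ᵥ f)) / (A * (1 - b2)) = α / (α + B) := by
    rw [hAβ, hAval]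
    field_simp
  have hc2 : (A - b ⬝ᵥ (a⁻¹ *ᵥ f)) ^ 2 / (A * (1 - b2) ^ 2) = α := by
    rw [hAβ, hAval]
    field_simp
  rw [hc1, hc2, hainvf, smul_add, smul_smul, smul_smul]
  have e1 : α / (α + B) * ((α + B) * α⁻¹) = 1 := by field_simp
  have e2 : α / (α + B) * (α + B) = α := by field_simp
  rw [e1, e2, one_smul]
  abel
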